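/- For every real t, the exponential generating function of the Catalan numbers satisfies f(t) = e^{2t}·(g(2t) − g'(2t)), where g is the modified Bessel function of order zero. -/

import Mathlib

open scoped Nat

/-- The exponential generating function of the Catalan numbers. -/
noncomputable def catalanEGF (t : ℝ) : ℝ := ∑' n : ℕ, (catalan n : ℝ) * t ^ n / n !

/-- The modified Bessel function of order zero,
`I₀(z) = Σ_{n≥0} z^(2n) / (4^n (n!)^2)`. -/
noncomputable def besselI0 (z : ℝ) : ℝ := ∑' n : ℕ, z ^ (2 * n) / (4 ^ n * (n !) ^ 2)

open Polynomial Finset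

noncomputable def besselI1 (z : ℝ) : ℝ :=
  ∑' m : ℕ, z ^ (2*m+1) / (2 * 4^m * (m ! : ℝ) * ((m+1)! : ℝ))

noncomputable def bcoef : ℕ → ℝ := fun n =>
  if n % 2 = 0 then 1 / ((n/2)! : ℝ)^2 else -(1 / (((n/2))! * ((n/2+1))! : ℝ))

lemma coeff_two_X_add_one_pow (k i : ℕ) :
    (((2*X+1 : Polynomial ℕ))^k).coeff i = 2^i * k.choose i := by
  rw [add_pow, finset_sum_coeff]
  have : ∀ j ∈ range (k+1),
      ((2*X:Polynomial ℕ)^j * 1^(k-j) * (k.choose j : Polynomial ℕ)).coeff i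
      = if j = i then 2^i * k.choose i else 0 := by
    intro j hj
    have h2 : (2:Polynomial ℕ) = C 2 := by simp
    rw [one_pow, mul_one, mul_pow, h2, ← C_pow, mul_assoc, coeff_C_mul, ← C_eq_natCast,
      mul_comm (X^j : Polynomial ℕ), coeff_C_mul, coeff_X_pow]
    split_ifs with h h' h'
    · subst h'; simp [Nat.cast_id, mul_comm]
    · subst h; simp at h' ⊢
    · exact absurd h'.symm h
    · ring
  rw [Finset.sum_congr rfl this]
  rw [Finset.sum_ite_eq' (range (k+1)) i fun _ => 2^i*k.choose i]
  by_cases h : i ∈ range (k+1)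
  · simp [h]
  · simp only [h, if_false]
    have : k.choose i = 0 := Nat.choose_eq_zero_of_lt (by simpa using h)
    simp [this]

lemma choose_two_mul_eq (n d : ℕ) :
    (2*n).choose d = ∑ m ∈ range (n+1),
      if 2*m ≤ d then n.choose m * ((n-m).choose (d - 2*m) * 2^(d-2*m)) else 0 := by
  have h : ((X+1 : Polynomial ℕ))^(2*n) = (X^2 + (2*X+1))^n := by
    rw [pow_mul]; ring_nf
  have h2 := congrArg (fun p : Polynomial ℕ => p.coeff d) h
  simp only [coeff_X_add_one_pow, Nat.cast_id] at h2
  rw [h2, add_pow, finset_sum_coeff]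
  refine Finset.sum_congr rfl fun m hm => ?_
  have : ((X:Polynomial ℕ)^2)^m * (2*X+1)^(n-m) * ((n.choose m : ℕ) : Polynomial ℕ)
      = (((n.choose m : ℕ) : Polynomial ℕ) * (2*X+1)^(n-m)) * X^(2*m) := by
    rw [← pow_mul]; ring
  rw [this, coeff_mul_X_pow', ← C_eq_natCast, coeff_C_mul, coeff_two_X_add_one_pow]
  split_ifs with hle
  · rw [Nat.cast_id]; ring
  · rfl

lemma lemA (n : ℕ) : (2*n).choose n
    = ∑ m ∈ range ((n+2)/2), n.choose m * ((n-m).choose (n-2*m) * 2^(n-2*m)) := by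
  rw [choose_two_mul_eq n n]
  rw [← Finset.sum_subset (Finset.range_subset_range.2 (by omega : (n+2)/2 ≤ n+1))
    (fun x _ hx => by rw [if_neg]; simp at hx; omega)]
  exact Finset.sum_congr rfl fun m hm => by rw [if_pos]; simp at hm; omega

lemma lemB (n : ℕ) : (2*n).choose (n+1)
    = ∑ m ∈ range ((n+1)/2),
        n.choose (m+1) * ((n-(m+1)).choose (n+1-2*(m+1)) * 2^(n+1-2*(m+1))) := by
  rw [choose_two_mul_eq n (n+1), Finset.sum_range_succ']
  have h0 : (if 2*0 ≤ n+1 then n.choose 0 * ((n-0).choose (n+1-2*0) * 2^(n+1-2*0)) else 0) = 0 := by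
    rw [if_pos (by omega)]
    simp [Nat.choose_succ_self]
  rw [h0, add_zero]
  rw [← Finset.sum_subset (Finset.range_subset_range.2 (by omega : (n+1)/2 ≤ n))
    (fun x _ hx => by rw [if_neg]; simp at hx; omega)]
  exact Finset.sum_congr rfl fun m hm => by rw [if_pos]; simp at hm; omega

lemma sum_range_even_odd {M : Type*} [AddCommMonoid M] (f : ℕ → M) (N : ℕ) :
    ∑ j ∈ range N, f j
      = (∑ m ∈ range ((N+1)/2), f (2*m)) + ∑ m ∈ range (N/2), f (2*m+1) := by
  induction N with
  | zero => simp
  | succ N ih =>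
    rw [Finset.sum_range_succ, ih]
    rcases Nat.even_or_odd N with ⟨k, hk⟩ | ⟨k, hk⟩
    · subst hk
      simp only [show (k+k+1+1)/2 = k+1 from by omega, show (k+k+1)/2 = k from by omega,
        show (k+k)/2 = k from by omega]
      rw [Finset.sum_range_succ (fun m => f (2*m)) k, show 2*k = k+k from by ring]
      abel
    · subst hk
      simp only [show (2*k+1+1+1)/2 = k+1 from by omega, show (2*k+1+1)/2 = k+1 from by omega,
        show (2*k+1)/2 = k from by omega]
      rw [Finset.sum_range_succ (fun m => f (2*m+1)) k]
      abel


lemma bcoef_even (m : ℕ) : bcoef (2*m) = 1 / ((m ! : ℝ))^2 := by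
  have h1 : (2*m) % 2 = 0 := by omega
  have h2 : (2*m)/2 = m := by omega
  simp [bcoef, h1, h2]

lemma bcoef_odd (m : ℕ) : bcoef (2*m+1) = -(1 / ((m ! : ℝ) * ((m+1)! : ℝ))) := by
  have h1 : (2*m+1) % 2 = 1 := by omega
  have h2 : (2*m+1)/2 = m := by omega
  simp [bcoef, h1, h2]

lemma fact_ne_r (m : ℕ) : ((m ! : ℝ)) ≠ 0 := Nat.cast_ne_zero.2 (Nat.factorial_ne_zero m)

lemma key (n : ℕ) :
    ∑ j ∈ range (n+1), (2:ℝ)^(n-j) / ((n-j)! : ℝ) * bcoef j = (catalan n : ℝ) / n ! := by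
  rw [sum_range_even_odd (fun j => (2:ℝ)^(n-j) / ((n-j)! : ℝ) * bcoef j) (n+1)]
  have hEven : ∑ m ∈ range ((n+1+1)/2), (2:ℝ)^(n-2*m) / ((n-2*m)! : ℝ) * bcoef (2*m)
      = ((2*n).choose n : ℝ) / n ! := by
    have hA : ((2*n).choose n : ℝ)
        = ∑ m ∈ range ((n+2)/2), (n.choose m : ℝ) * (((n-m).choose (n-2*m) : ℝ) * 2^(n-2*m)) := by
      rw [lemA n]; push_cast; rfl
    rw [show (n+1+1)/2 = (n+2)/2 from rfl, hA, Finset.sum_div]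
    refine Finset.sum_congr rfl fun m hm => ?_
    have h2m : 2*m ≤ n := by simp at hm; omega
    rw [bcoef_even, Nat.cast_choose ℝ (show m ≤ n by omega),
      Nat.cast_choose ℝ (show n-2*m ≤ n-m by omega),
      show (n-m)-(n-2*m) = m from by omega]
    have e1 := fact_ne_r m; have e2 := fact_ne_r (n-m); have e3 := fact_ne_r (n-2*m)
    have e4 := fact_ne_r n
    field_simp
  have hOdd : ∑ m ∈ range ((n+1)/2), (2:ℝ)^(n-(2*m+1)) / ((n-(2*m+1))! : ℝ) * bcoef (2*m+1)
      = -(((2*n).choose (n+1) : ℝ) / n !) := by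
    have hB : ((2*n).choose (n+1) : ℝ)
        = ∑ m ∈ range ((n+1)/2),
            (n.choose (m+1) : ℝ) * (((n-(m+1)).choose (n+1-2*(m+1)) : ℝ) * 2^(n+1-2*(m+1))) := by
      rw [lemB n]; push_cast; rfl
    rw [hB, Finset.sum_div, ← Finset.sum_neg_distrib]
    refine Finset.sum_congr rfl fun m hm => ?_
    have h2m : 2*m+1 ≤ n := by simp at hm; omega
    rw [bcoef_odd, Nat.cast_choose ℝ (show m+1 ≤ n by omega),
      Nat.cast_choose ℝ (show n+1-2*(m+1) ≤ n-(m+1) by omega),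
      show (n-(m+1))-(n+1-2*(m+1)) = m from by omega,
      show n+1-2*(m+1) = n-(2*m+1) from by omega]
    have e1 := fact_ne_r m; have e2 := fact_ne_r (m+1); have e3 := fact_ne_r (n-(m+1))
    have e4 := fact_ne_r n; have e5 := fact_ne_r (n-(2*m+1))
    field_simp
  rw [hEven, hOdd]
  -- now : choose/n! - choose'/n! = catalan n / n!
  have hc : ((n:ℝ)+1) * (catalan n : ℝ) = ((2*n).choose n : ℝ) := by
    have := succ_mul_catalan_eq_centralBinom n
    rw [Nat.centralBinom_eq_two_mul_choose] at this
    exact_mod_cast congrArg (Nat.cast : ℕ → ℝ) this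
  have hb : ((2*n).choose (n+1) : ℝ) * ((n:ℝ)+1) = ((2*n).choose n : ℝ) * n := by
    have := Nat.choose_succ_right_eq (2*n) n
    rw [show 2*n - n = n from by omega] at this
    exact_mod_cast congrArg (Nat.cast : ℕ → ℝ) this
  have hne : ((n:ℝ)+1) ≠ 0 := by positivity
  have hcat : (catalan n : ℝ) = ((2*n).choose n : ℝ) - ((2*n).choose (n+1) : ℝ) := by
    have h1 : ((n:ℝ)+1) * (catalan n : ℝ)
        = ((n:ℝ)+1) * (((2*n).choose n : ℝ) - ((2*n).choose (n+1) : ℝ)) := by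
      rw [hc]; nlinarith [hb]
    exact mul_left_cancel₀ hne h1
  rw [hcat]
  ring



noncomputable def bgder (n : ℕ) (y : ℝ) : ℝ := ((2*n : ℕ):ℝ) * y^(2*n-1)/(4^n*((n !:ℝ))^2)

noncomputable def ubound (R : ℝ) (n : ℕ) : ℝ := 2*(n:ℝ) * R^(2*n-1)/(4^n * ((n !:ℝ))^2)



lemma sumNX (x : ℝ) : Summable (fun n : ℕ => (n:ℝ) * x^n / n !) := by
  rw [← summable_nat_add_iff 1]
  refine ((Real.summable_pow_div_factorial x).mul_left x).congr fun n => ?_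
  rw [Nat.factorial_succ]
  push_cast
  have h1 := fact_ne_r n
  field_simp
  ring

lemma summable_ubound {R : ℝ} (hR1 : 1 ≤ R) : Summable (ubound R) := by
  refine Summable.of_nonneg_of_le (fun n => ?_) (fun n => ?_) ((sumNX (R^2/4)).mul_left 2)
  · simp only [ubound]; positivity
  · show ubound R n ≤ 2 * ((n:ℝ) * (R^2/4)^n / (n ! : ℝ))
    have heq : 2 * ((n:ℝ) * (R^2/4)^n / (n ! : ℝ)) = 2*(n:ℝ)*R^(2*n)/(4^n * (n ! : ℝ)) := by
      rw [div_pow, pow_mul]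
      have h1 := fact_ne_r n
      have h4 : ((4:ℝ)^n) ≠ 0 := by positivity
      field_simp
    rw [ubound, heq]
    have hR0 : (0:ℝ) < R := by linarith
    have h1 : R^(2*n-1) ≤ R^(2*n) := pow_le_pow_right₀ hR1 (by omega)
    have h2 : (n ! : ℝ) ≤ ((n !:ℝ))^2 := by
      have : (1:ℝ) ≤ (n ! : ℝ) := by
        exact_mod_cast Nat.one_le_iff_ne_zero.2 (Nat.factorial_ne_zero n)
      nlinarith
    gcongr

lemma bgder_bound {R : ℝ} (n : ℕ) {y : ℝ} (hy : |y| ≤ R) : ‖bgder n y‖ ≤ ubound R n := by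
  have heq : ‖bgder n y‖ = 2*(n:ℝ) * |y|^(2*n-1)/(4^n * ((n !:ℝ))^2) := by
    rw [bgder]
    simp only [Real.norm_eq_abs, abs_div, abs_mul, abs_pow, Nat.abs_cast]
    rw [show |(4:ℝ)| = 4 by norm_num]
    push_cast
    ring
  rw [heq, ubound]
  gcongr

lemma hasDeriv_besselI0 (z : ℝ) : HasDerivAt besselI0 (besselI1 z) z := by
  set R : ℝ := |z| + 1 with hRdef
  have hR1 : (1:ℝ) ≤ R := by rw [hRdef]; linarith [abs_nonneg z]
  have hR0 : (0:ℝ) < R := by linarith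
  have hzR : z ∈ Metric.ball (0:ℝ) R := by
    simp [Metric.mem_ball, Real.dist_eq, hRdef]
  have hu := summable_ubound hR1
  have hg : ∀ n : ℕ, ∀ y ∈ Metric.ball (0:ℝ) R,
      HasDerivAt (fun x : ℝ => x^(2*n)/(4^n*((n !:ℝ))^2)) (bgder n y) y := by
    intro n y _
    exact (hasDerivAt_pow (2*n) y).div_const _
  have hbound : ∀ n : ℕ, ∀ y ∈ Metric.ball (0:ℝ) R, ‖bgder n y‖ ≤ ubound R n := by
    intro n y hy
    apply bgder_bound
    simp [Metric.mem_ball, Real.dist_eq] at hy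
    linarith
  have hg0 : Summable (fun n : ℕ => (0:ℝ)^(2*n)/(4^n*((n !:ℝ))^2)) := by
    apply summable_of_ne_finset_zero (s := {0})
    intro n hn
    simp at hn
    rw [zero_pow (by omega), zero_div]
  have hmain := hasDerivAt_tsum_of_isPreconnected hu Metric.isOpen_ball
    (convex_ball (0:ℝ) R).isPreconnected hg hbound (Metric.mem_ball_self hR0) hg0 hzR
  have hs : Summable (fun n => bgder n z) := by
    apply Summable.of_norm_bounded hu
    exact fun n => hbound n z hzR
  have h1 : besselI1 z = ∑' n, bgder n z := by
    rw [hs.tsum_eq_zero_add]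
    have hz0 : bgder 0 z = 0 := by rw [bgder]; norm_num
    rw [hz0, zero_add, besselI1]
    apply tsum_congr
    intro k
    rw [bgder]
    rw [show 2*(k+1)-1 = 2*k+1 from by omega, Nat.factorial_succ]
    have h1 := fact_ne_r k
    have h4 : ((4:ℝ)^k) ≠ 0 := by positivity
    have hk1 : ((k:ℝ)+1) ≠ 0 := by positivity
    push_cast
    rw [pow_succ]
    field_simp
    ring
  rw [h1]
  exact hmain


lemma fact_one_le (m : ℕ) : (1:ℝ) ≤ (m ! : ℝ) := by
  exact_mod_cast Nat.one_le_iff_ne_zero.2 (Nat.factorial_ne_zero m)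

lemma bcoef_even_norm (t : ℝ) (m : ℕ) :
    ‖bcoef (2*m) * t^(2*m)‖ = (t^2)^m / ((m ! : ℝ))^2 := by
  rw [bcoef_even, pow_mul, show t^2 = t^2 from rfl]
  rw [Real.norm_eq_abs, abs_of_nonneg (by positivity)]
  ring

lemma bcoef_odd_norm (t : ℝ) (m : ℕ) :
    ‖bcoef (2*m+1) * t^(2*m+1)‖ = |t| * (t^2)^m / ((m ! : ℝ) * ((m+1)! : ℝ)) := by
  rw [bcoef_odd, pow_succ, pow_mul]
  simp only [Real.norm_eq_abs, abs_mul, abs_neg, abs_div, abs_one, abs_pow, sq_abs,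
    Nat.abs_cast]
  ring

lemma summable_even_norm (t : ℝ) : Summable fun m : ℕ => ‖bcoef (2*m) * t^(2*m)‖ := by
  refine Summable.of_nonneg_of_le (fun m => norm_nonneg _) (fun m => ?_)
    (Real.summable_pow_div_factorial (t^2))
  rw [bcoef_even_norm]
  gcongr
  nlinarith [fact_one_le m]

lemma summable_odd_norm (t : ℝ) : Summable fun m : ℕ => ‖bcoef (2*m+1) * t^(2*m+1)‖ := by
  refine Summable.of_nonneg_of_le (fun m => norm_nonneg _) (fun m => ?_)
    ((Real.summable_pow_div_factorial (t^2)).mul_left |t|)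
  rw [bcoef_odd_norm]
  rw [mul_div_assoc]
  gcongr
  nlinarith [fact_one_le m, fact_one_le (m+1)]

lemma summable_bcoef_norm (t : ℝ) : Summable fun n : ℕ => ‖bcoef n * t^n‖ :=
  Summable.even_add_odd (summable_even_norm t) (summable_odd_norm t)

lemma summable_exp_norm (t : ℝ) : Summable fun n : ℕ => ‖(2*t)^n / (n ! : ℝ)‖ := by
  refine (Real.summable_pow_div_factorial |2*t|).congr fun n => ?_
  rw [Real.norm_eq_abs, abs_div, abs_pow, abs_of_nonneg (by positivity : (0:ℝ) ≤ (n ! : ℝ))]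

lemma besselI0_two (t : ℝ) : besselI0 (2*t) = ∑' m : ℕ, bcoef (2*m) * t^(2*m) := by
  rw [besselI0]
  refine tsum_congr fun m => ?_
  rw [bcoef_even, pow_mul, mul_pow, pow_mul]
  have h4 : ((2:ℝ)^2) = 4 := by norm_num
  rw [h4]
  have := fact_ne_r m
  field_simp
  ring

lemma besselI1_two (t : ℝ) : besselI1 (2*t) = ∑' m : ℕ, -(bcoef (2*m+1) * t^(2*m+1)) := by
  rw [besselI1]
  refine tsum_congr fun m => ?_
  rw [bcoef_odd]
  have h1 := fact_ne_r m
  have h2 := fact_ne_r (m+1)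
  have h4 : ((4:ℝ)^m) ≠ 0 := by positivity
  rw [mul_pow, pow_succ, pow_mul]
  have h4' : ((2:ℝ)^2) = 4 := by norm_num
  rw [h4']
  field_simp

/-- For every real t, the exponential generating function of the
Catalan numbers satisfies f(t) = e^{2t}·(g(2t) − g'(2t)), where g is the modified
Bessel function of order zero. -/
theorem catalan_egf_eq_bessel (t : ℝ) :
    catalanEGF t = Real.exp (2 * t) * (besselI0 (2 * t) - deriv besselI0 (2 * t)) := by
  have hderiv : deriv besselI0 (2*t) = besselI1 (2*t) := (hasDeriv_besselI0 (2*t)).deriv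
  have hdiff : besselI0 (2*t) - deriv besselI0 (2*t) = ∑' n : ℕ, bcoef n * t^n := by
    rw [hderiv, besselI0_two, besselI1_two, tsum_neg, sub_neg_eq_add]
    exact tsum_even_add_odd (f := fun n => bcoef n * t^n) ((summable_even_norm t).of_norm)
      ((summable_odd_norm t).of_norm)
  have hexp : Real.exp (2*t) = ∑' n : ℕ, (2*t)^n / (n ! : ℝ) := by
    rw [Real.exp_eq_exp_ℝ]
    exact (NormedSpace.expSeries_div_hasSum_exp (2*t)).tsum_eq.symm
  rw [hdiff, hexp]
  rw [tsum_mul_tsum_eq_tsum_sum_antidiagonal_of_summable_norm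
    (summable_exp_norm t) (summable_bcoef_norm t)]
  rw [catalanEGF]
  refine tsum_congr fun n => ?_
  rw [Finset.Nat.sum_antidiagonal_eq_sum_range_succ_mk, ← Finset.sum_range_reflect]
  have hsum : ∀ j ∈ range (n+1),
      (2*t)^(n+1-1-j) / (((n+1-1-j)! : ℝ)) * (bcoef (n - (n+1-1-j)) * t^(n - (n+1-1-j)))
      = ((2:ℝ)^(n-j) / ((n-j)! : ℝ) * bcoef j) * t^n := by
    intro j hj
    have hjn : j ≤ n := by simpa [Nat.lt_succ_iff] using hj
    rw [show n+1-1-j = n-j from by omega, show n - (n-j) = j from by omega]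
    rw [mul_pow]
    have : t^(n-j) * t^j = t^n := by
      rw [← pow_add]
      congr 1
      omega
    calc (2:ℝ)^(n-j) * t^(n-j) / ((n-j)! : ℝ) * (bcoef j * t^j)
        = ((2:ℝ)^(n-j) / ((n-j)! : ℝ) * bcoef j) * (t^(n-j) * t^j) := by ring
      _ = _ := by rw [this]
  rw [Finset.sum_congr rfl hsum, ← Finset.sum_mul, key]
  ring
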